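/- Let E be a real inner product space and h : E → ℝ differentiable with ∇h injective. Let α, γ : ℝ → ℝ with γ satisfying, for every t, that γ has derivative exp(α t) at t (the ideal scaling condition). Suppose X, V : ℝ → E satisfy, for every t, that X has derivative V t at t and that the map t ↦ ∇h(X t + exp(−α t) • V t) is constant. Then there exist a, b ∈ E such that X t = exp(−γ t) • a + b for all t. (The natural motion of the Bregman Lagrangian is independent of h.) -/

import Mathlib

open Real
open scoped RealInnerProductSpace

/-- The natural motion of the Bregman Lagrangian (Appendix B.6 of
the paper): under the ideal scaling `γ̇_t = e^{α_t}`, if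
`∇h(X_t + e^{−α_t} Ẋ_t)` is constant in `t` (the Euler–Lagrange equation with zero
potential) and `∇h` is injective, then `X_t = e^{−γ_t} a + b` for some `a, b`. -/
theorem bregman_lagrangian_natural_motion
    {E : Type*} [NormedAddCommGroup E] [InnerProductSpace ℝ E] [CompleteSpace E]
    (h : E → ℝ) (hh : Differentiable ℝ h) (hinj : Function.Injective (gradient h))
    (α γ : ℝ → ℝ) (hγ : ∀ t, HasDerivAt γ (Real.exp (α t)) t)
    (X V : ℝ → E) (hX : ∀ t, HasDerivAt X (V t) t)
    (hconst : ∀ s t : ℝ,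
      gradient h (X s + Real.exp (-(α s)) • V s) =
      gradient h (X t + Real.exp (-(α t)) • V t)) :
    ∃ a b : E, ∀ t : ℝ, X t = Real.exp (-(γ t)) • a + b := by
  set c : E := X 0 + Real.exp (-(α 0)) • V 0 with hc
  have hXVc : ∀ t, X t + Real.exp (-(α t)) • V t = c := fun t =>
    hinj (hconst t 0)
  have hV : ∀ t, V t = Real.exp (α t) • (c - X t) := by
    intro t
    have h1 : Real.exp (-(α t)) • V t = c - X t := by
      have := hXVc t; linear_combination (norm := module) this
    have := congrArg (fun z => Real.exp (α t) • z) h1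
    simpa [smul_smul, ← Real.exp_add] using this
  set F : ℝ → E := fun t => Real.exp (γ t) • (X t - c) with hF
  have hF' : ∀ t, HasDerivAt F 0 t := by
    intro t
    have hsc : HasDerivAt (fun t => Real.exp (γ t)) (Real.exp (γ t) * Real.exp (α t)) t :=
      (Real.hasDerivAt_exp (γ t)).comp t (hγ t)
    have hvec : HasDerivAt (fun t => X t - c) (V t) t := (hX t).sub_const c
    have := hsc.smul hvec
    convert this using 1
    · rfl
    rw [hV t]
    module
  have hFc : ∀ t, F t = F 0 := by
    intro t
    have hdiff : Differentiable ℝ F := fun t => (hF' t).differentiableAt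
    have hzero : ∀ t, deriv F t = 0 := fun t => (hF' t).deriv
    exact is_const_of_deriv_eq_zero hdiff hzero t 0
  refine ⟨F 0, c, fun t => ?_⟩
  have h1 : Real.exp (γ t) • (X t - c) = F 0 := hFc t
  have := congrArg (fun z => Real.exp (-(γ t)) • z) h1
  simp only [smul_smul, ← Real.exp_add, neg_add_cancel, Real.exp_zero, one_smul] at this
  rw [← this]
  module
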